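/- arXiv:2201.08760 — 3 statements merged into one kernel-verified Lean document; each statement's English description precedes it below -/
import Mathlib

section
/- Let g : [0,∞) → ℝ be measurable with |g(u)| ≤ M_g, and for x > 0 let f(x) = ∫₀^∞ g(u) cosh(u/2)/(sinh²(u/2)+x) du. Then for every ξ > 0 and natural number K, |f^{(K+1)}(ξ)| ≤ M_g (K+1)! π ξ^{-3/2-K} ∏_{k=1}^{K+1} (2k−1)/(2k). -/
open Real MeasureTheory Set


lemma sinh_half_image : (fun u : ℝ => Real.sinh (u/2)) '' Set.Ioi 0 = Set.Ioi 0 := by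
  ext t
  simp only [Set.mem_image, Set.mem_Ioi]
  constructor
  · rintro ⟨u, hu, rfl⟩
    exact Real.sinh_pos_iff.mpr (by linarith)
  · intro ht
    refine ⟨2 * Real.arsinh t, by simpa using Real.arsinh_pos_iff.mpr ht, ?_⟩
    rw [show (2:ℝ) * Real.arsinh t / 2 = Real.arsinh t by ring, Real.sinh_arsinh]

lemma sinh_half_deriv (u : ℝ) :
    HasDerivAt (fun u : ℝ => Real.sinh (u/2)) (Real.cosh (u/2) / 2) u := by
  have h := (Real.hasDerivAt_sinh (u/2)).comp u ((hasDerivAt_id u).div_const 2)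
  exact h.congr_deriv (by ring)

lemma sinh_half_strictMono : StrictMono (fun u : ℝ => Real.sinh (u/2)) :=
  Real.sinh_strictMono.comp (fun a b h => by by_contra hc; push_neg at hc; nlinarith)

lemma sinh_half_injOn : Set.InjOn (fun u : ℝ => Real.sinh (u/2)) (Set.Ioi 0) :=
  sinh_half_strictMono.injective.injOn

open intervalIntegral in
lemma cos_pow_half (m : ℕ) : ∫ θ in (0:ℝ)..(π/2), Real.cos θ ^ (2*m) =
    (π/2) * ∏ i ∈ Finset.range m, (2*(i:ℝ)+1)/(2*i+2) := by
  have h1 : ∫ θ in (0:ℝ)..(π/2), Real.cos θ ^ (2*m)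
      = ∫ θ in (0:ℝ)..(π/2), Real.sin θ ^ (2*m) := by
    have := intervalIntegral.integral_comp_sub_left (a := 0) (b := π/2)
      (fun x => Real.sin x ^ (2*m)) (π/2)
    simp only [Real.sin_pi_div_two_sub, sub_zero, sub_self] at this
    rw [← this]
  have h2 : ∫ θ in (π/2)..π, Real.sin θ ^ (2*m)
      = ∫ θ in (0:ℝ)..(π/2), Real.sin θ ^ (2*m) := by
    have := intervalIntegral.integral_comp_sub_left (a := 0) (b := π/2)
      (fun x => Real.sin x ^ (2*m)) π
    simp only [Real.sin_pi_sub, sub_zero] at this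
    rw [show π - π/2 = π/2 by ring] at this
    rw [← this]
  have h3 : (∫ θ in (0:ℝ)..(π/2), Real.sin θ ^ (2*m))
      + ∫ θ in (π/2)..π, Real.sin θ ^ (2*m) = ∫ θ in (0:ℝ)..π, Real.sin θ ^ (2*m) :=
    intervalIntegral.integral_add_adjacent_intervals
      ((Real.continuous_sin.pow _).intervalIntegrable _ _)
      ((Real.continuous_sin.pow _).intervalIntegrable _ _)
  have h4 := integral_sin_pow_even (n := m)
  rw [h1]
  rw [h2] at h3
  linarith [h4, h3]

lemma cos_ne_zero_Ioo {θ : ℝ} (hθ : θ ∈ Set.Ioo 0 (π/2)) : Real.cos θ ≠ 0 :=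
  (Real.cos_pos_of_mem_Ioo ⟨by linarith [hθ.1, Real.pi_pos], hθ.2⟩).ne'

lemma tan_image' : Real.tan '' Set.Ioo 0 (π/2) = Set.Ioi 0 := by
  ext t
  simp only [Set.mem_image, Set.mem_Ioi]
  constructor
  · rintro ⟨θ, hθ, rfl⟩
    exact Real.tan_pos_of_pos_of_lt_pi_div_two hθ.1 hθ.2
  · intro ht
    exact ⟨Real.arctan t, ⟨by simpa using Real.arctan_strictMono ht,
      Real.arctan_lt_pi_div_two t⟩, Real.tan_arctan t⟩

lemma tan_injOn' : Set.InjOn Real.tan (Set.Ioo 0 (π/2)) :=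
  Real.injOn_tan.mono (by intro x hx; exact ⟨by linarith [hx.1, Real.pi_pos], hx.2⟩)

lemma wallis_aux (m : ℕ) : ∀ θ ∈ Set.Ioo 0 (π/2),
    |1 / Real.cos θ ^ 2| • ((Real.tan θ ^ 2 + 1)^(m+1))⁻¹ = Real.cos θ ^ (2*m) := by
  intro θ hθ
  have hc := cos_ne_zero_Ioo hθ
  have h1 : Real.tan θ ^ 2 + 1 = (Real.cos θ ^ 2)⁻¹ := by
    rw [add_comm, ← Real.inv_one_add_tan_sq hc, inv_inv]
  rw [smul_eq_mul, h1, abs_of_pos (by positivity), one_div, inv_pow, inv_inv, pow_mul]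
  field_simp
  ring

lemma wallis_int (m : ℕ) :
    ∫ t in Set.Ioi (0:ℝ), ((t^2+1)^(m+1))⁻¹
      = (π/2) * ∏ i ∈ Finset.range m, (2*(i:ℝ)+1)/(2*i+2) := by
  rw [← tan_image', integral_image_eq_integral_abs_deriv_smul measurableSet_Ioo
    (fun θ hθ => (Real.hasDerivAt_tan (cos_ne_zero_Ioo hθ)).hasDerivWithinAt) tan_injOn']
  rw [MeasureTheory.setIntegral_congr_fun measurableSet_Ioo (wallis_aux m)]
  rw [← MeasureTheory.integral_Ioc_eq_integral_Ioo,
    ← intervalIntegral.integral_of_le (by positivity)]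
  exact cos_pow_half m

lemma wallis_integrable (m : ℕ) :
    IntegrableOn (fun t : ℝ => ((t^2+1)^(m+1))⁻¹) (Set.Ioi 0) := by
  rw [← tan_image', integrableOn_image_iff_integrableOn_abs_deriv_smul measurableSet_Ioo
    (fun θ hθ => (Real.hasDerivAt_tan (cos_ne_zero_Ioo hθ)).hasDerivWithinAt) tan_injOn']
  apply ((Real.continuous_cos.pow (2*m)).integrableOn_Ioc).mono_set Set.Ioo_subset_Ioc_self
    |>.congr_fun (fun θ hθ => (wallis_aux m θ hθ).symm) measurableSet_Ioo

lemma cont_inv_pow (c : ℝ) (hc : 0 < c) (m : ℕ) :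
    Continuous (fun t : ℝ => ((t^2+c)^(m+1))⁻¹) := by
  apply Continuous.inv₀ (by continuity)
  intro t; positivity

lemma scaled_integrable (c : ℝ) (hc : 0 < c) (m : ℕ)
    (hw : IntegrableOn (fun t : ℝ => ((t^2+1)^(m+1))⁻¹) (Set.Ioi 0)) :
    IntegrableOn (fun t : ℝ => ((t^2+c)^(m+1))⁻¹) (Set.Ioi 0) := by
  have hmin : 0 < min 1 c := lt_min one_pos hc
  apply Integrable.mono' (hw.const_mul ((min 1 c)^(m+1))⁻¹)
    ((cont_inv_pow c hc m).aestronglyMeasurable)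
  filter_upwards with t
  rw [Real.norm_eq_abs, abs_of_pos (by positivity)]
  rw [← mul_inv, ← mul_pow]
  apply inv_anti₀ (by positivity)
  apply pow_le_pow_left₀ (by positivity)
  rcases le_total 1 c with h | h
  · rw [min_eq_left h]; nlinarith [sq_nonneg t]
  · rw [min_eq_right h]; nlinarith [sq_nonneg t]

lemma scaled_int (c : ℝ) (hc : 0 < c) (m : ℕ) :
    ∫ t in Set.Ioi (0:ℝ), ((t^2+c)^(m+1))⁻¹
      = Real.sqrt c * (c^(m+1))⁻¹ * ∫ s in Set.Ioi (0:ℝ), ((s^2+1)^(m+1))⁻¹ := by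
  have hs : 0 < Real.sqrt c := Real.sqrt_pos.mpr hc
  have h := MeasureTheory.integral_comp_mul_left_Ioi
    (fun t => ((t^2+c)^(m+1))⁻¹) 0 hs
  rw [mul_zero] at h
  have key : ∀ s : ℝ, (((Real.sqrt c * s)^2+c)^(m+1))⁻¹
      = (c^(m+1))⁻¹ * ((s^2+1)^(m+1))⁻¹ := by
    intro s
    rw [← mul_inv, ← mul_pow]
    congr 2
    rw [mul_pow, Real.sq_sqrt hc.le]
    ring
  simp only [key] at h
  rw [integral_const_mul] at h
  rw [smul_eq_mul] at h
  field_simp at h ⊢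
  nlinarith [h, Real.sq_sqrt hc.le, Real.sqrt_nonneg c]

lemma cosh_subst (h : ℝ → ℝ) :
    ∫ t in Set.Ioi (0:ℝ), h t
      = ∫ u in Set.Ioi (0:ℝ), (Real.cosh (u/2) / 2) * h (Real.sinh (u/2)) := by
  conv_lhs => rw [← sinh_half_image]
  rw [integral_image_eq_integral_abs_deriv_smul measurableSet_Ioi
    (fun u _ => (sinh_half_deriv u).hasDerivWithinAt) sinh_half_injOn]
  apply MeasureTheory.setIntegral_congr_fun measurableSet_Ioi
  intro u _
  dsimp only
  rw [smul_eq_mul, abs_of_pos (by positivity)]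


lemma hasDerivAt_inner (s : ℝ) (hs : 0 ≤ s) (n : ℕ) (x : ℝ) (hx : 0 < x) :
    HasDerivAt (fun x : ℝ => ((-1:ℝ)^n * n.factorial * ((s + x)^(n+1))⁻¹))
      ((-1:ℝ)^(n+1) * (n+1).factorial * ((s + x)^(n+2))⁻¹) x := by
  have hsx : 0 < s + x := by linarith
  have hne : s + x ≠ 0 := hsx.ne'
  have h0 : HasDerivAt (fun x : ℝ => s + x) 1 x := (hasDerivAt_id x).const_add s
  have h1 : HasDerivAt (fun x : ℝ => (s + x)^(n+1)) (↑(n+1) * (s+x)^(n+1-1) * 1) x := h0.pow (n+1)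
  have h2 := h1.inv (by positivity)
  have h3 := h2.const_mul ((-1:ℝ)^n * n.factorial)
  refine h3.congr_deriv ?_
  rw [Nat.factorial_succ]
  push_cast
  field_simp
  ring

lemma meas_P (g : ℝ → ℝ) (hgm : Measurable g) (n : ℕ) (c : ℝ) (x : ℝ) :
    Measurable (fun u : ℝ => g u * Real.cosh (u/2) *
      (c * ((Real.sinh (u/2)^2 + x)^(n+1))⁻¹)) := by
  fun_prop

lemma deriv_step (g : ℝ → ℝ) (Mg : ℝ) (hgm : Measurable g) (hgb : ∀ u, |g u| ≤ Mg)
    (n : ℕ) (x₀ : ℝ) (hx : 0 < x₀)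
    (hbi : IntegrableOn (fun u : ℝ =>
      Real.cosh (u/2) * ((Real.sinh (u/2)^2 + x₀/2)^(n+2))⁻¹) (Set.Ioi 0))
    (hbi0 : IntegrableOn (fun u : ℝ =>
      Real.cosh (u/2) * ((Real.sinh (u/2)^2 + x₀)^(n+1))⁻¹) (Set.Ioi 0)) :
    HasDerivAt (fun x => ∫ u in Set.Ioi (0:ℝ),
        g u * Real.cosh (u/2) * ((-1:ℝ)^n * n.factorial * ((Real.sinh (u/2)^2 + x)^(n+1))⁻¹))
      (∫ u in Set.Ioi (0:ℝ),
        g u * Real.cosh (u/2) * ((-1:ℝ)^(n+1) * (n+1).factorial *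
          ((Real.sinh (u/2)^2 + x₀)^(n+2))⁻¹)) x₀ := by
  have hMg : 0 ≤ Mg := le_trans (abs_nonneg _) (hgb 0)
  have hε : 0 < x₀/2 := by linarith
  have hball : ∀ x ∈ Metric.ball x₀ (x₀/2), x₀/2 < x := by
    intro x hx'
    rw [Metric.mem_ball, Real.dist_eq, abs_lt] at hx'
    linarith [hx'.1]
  refine (hasDerivAt_integral_of_dominated_loc_of_deriv_le
    (F' := fun x u => g u * Real.cosh (u/2) * ((-1:ℝ)^(n+1) * (n+1).factorial *
      ((Real.sinh (u/2)^2 + x)^(n+2))⁻¹))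
    (bound := fun u => Mg * ((n+1).factorial : ℝ) *
      (Real.cosh (u/2) * ((Real.sinh (u/2)^2 + x₀/2)^(n+2))⁻¹))
    (Metric.ball_mem_nhds x₀ hε) ?_ ?_ ?_ ?_ ?_ ?_).2
  · filter_upwards with x
    exact (meas_P g hgm n _ x).aestronglyMeasurable
  · -- Integrable (F x₀)
    apply Integrable.mono' (hbi0.const_mul (Mg * (n.factorial : ℝ)))
      (meas_P g hgm n _ x₀).aestronglyMeasurable
    filter_upwards with u
    have h2 : (0:ℝ) < (Real.sinh (u/2)^2 + x₀)^(n+1) := by positivity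
    calc ‖g u * Real.cosh (u/2) * ((-1:ℝ)^n * n.factorial *
          ((Real.sinh (u/2)^2 + x₀)^(n+1))⁻¹)‖
        = |g u| * Real.cosh (u/2) * ((n.factorial : ℝ) *
            ((Real.sinh (u/2)^2 + x₀)^(n+1))⁻¹) := by
          rw [Real.norm_eq_abs]
          simp [abs_mul, abs_of_pos (Real.cosh_pos (u/2)), abs_of_pos (inv_pos.mpr h2), abs_pow, (Real.cosh_pos (u/2)).le]
      _ ≤ Mg * Real.cosh (u/2) * ((n.factorial : ℝ) *
            ((Real.sinh (u/2)^2 + x₀)^(n+1))⁻¹) := by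
          gcongr <;> first
            | exact hgb u
            | positivity
            | linarith
      _ = Mg * (n.factorial : ℝ) *
            (Real.cosh (u/2) * ((Real.sinh (u/2)^2 + x₀)^(n+1))⁻¹) := by ring
  · exact (meas_P g hgm (n+1) _ x₀).aestronglyMeasurable
  · -- bound
    filter_upwards with u
    intro x hx'
    have hxx := hball x hx'
    have hx0 : (0:ℝ) < Real.sinh (u/2)^2 + x := by nlinarith [sq_nonneg (Real.sinh (u/2))]
    have h2 : (0:ℝ) < (Real.sinh (u/2)^2 + x)^(n+2) := pow_pos hx0 _
    calc ‖g u * Real.cosh (u/2) * ((-1:ℝ)^(n+1) * ((n+1).factorial : ℝ) *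
          ((Real.sinh (u/2)^2 + x)^(n+2))⁻¹)‖
        = |g u| * Real.cosh (u/2) * (((n+1).factorial : ℝ) *
            ((Real.sinh (u/2)^2 + x)^(n+2))⁻¹) := by
          rw [Real.norm_eq_abs]
          simp [abs_mul, abs_of_pos (Real.cosh_pos (u/2)), abs_of_pos (inv_pos.mpr h2), abs_pow, (Real.cosh_pos (u/2)).le]
      _ ≤ Mg * Real.cosh (u/2) * (((n+1).factorial : ℝ) *
            ((Real.sinh (u/2)^2 + x₀/2)^(n+2))⁻¹) := by
          gcongr <;> first
            | exact hgb u
            | positivity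
            | linarith
      _ = Mg * ((n+1).factorial : ℝ) *
            (Real.cosh (u/2) * ((Real.sinh (u/2)^2 + x₀/2)^(n+2))⁻¹) := by ring
  · exact hbi.const_mul _
  · filter_upwards with u
    intro x hx'
    have hxx := hball x hx'
    exact (hasDerivAt_inner (Real.sinh (u/2)^2) (sq_nonneg _) n x
      (by linarith)).const_mul (g u * Real.cosh (u/2))

lemma prod_convert (K : ℕ) :
    ∏ i ∈ Finset.range (K+1), (2*(i:ℝ)+1)/(2*i+2)
      = ∏ k ∈ Finset.Icc 1 (K + 1), ((2 * (k:ℝ) - 1) / (2 * k)) := by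
  rw [← Finset.Ico_add_one_right_eq_Icc, Finset.prod_Ico_eq_prod_range]
  apply Finset.prod_congr (by norm_num)
  intro i _
  push_cast
  ring_nf

lemma rpow_convert (ξ : ℝ) (hξ : 0 < ξ) (K : ℕ) :
    Real.sqrt ξ * (ξ^(K+2))⁻¹ = ξ ^ (-(3:ℝ)/2 - K) := by
  rw [Real.sqrt_eq_rpow, ← Real.rpow_natCast ξ (K+2), ← Real.rpow_neg hξ.le,
    ← Real.rpow_add hξ]
  congr 1
  push_cast
  ring

lemma cosh_subst_integrable (h : ℝ → ℝ) (hh : IntegrableOn h (Set.Ioi 0)) :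
    IntegrableOn (fun u : ℝ => (Real.cosh (u/2) / 2) * h (Real.sinh (u/2))) (Set.Ioi 0) := by
  have := (integrableOn_image_iff_integrableOn_abs_deriv_smul measurableSet_Ioi
    (fun u (_ : u ∈ Set.Ioi (0:ℝ)) => (sinh_half_deriv u).hasDerivWithinAt)
    sinh_half_injOn h).mp (by rwa [sinh_half_image])
  apply this.congr_fun _ measurableSet_Ioi
  intro u _
  dsimp only
  rw [smul_eq_mul, abs_of_pos (by positivity)]

lemma cosh_integrable (c : ℝ) (hc : 0 < c) (m : ℕ) :
    IntegrableOn (fun u : ℝ =>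
      Real.cosh (u/2) * ((Real.sinh (u/2)^2 + c)^(m+1))⁻¹) (Set.Ioi 0) := by
  have h : IntegrableOn (fun u : ℝ =>
      2 * (Real.cosh (u/2)/2 * ((Real.sinh (u/2)^2+c)^(m+1))⁻¹)) (Set.Ioi 0) :=
    (cosh_subst_integrable _ (scaled_integrable c hc m (wallis_integrable m))).const_mul 2
  apply IntegrableOn.congr_fun h ?_ measurableSet_Ioi
  intro u _
  dsimp only
  ring

lemma cosh_val (c : ℝ) (hc : 0 < c) (m : ℕ) :
    ∫ u in Set.Ioi (0:ℝ), Real.cosh (u/2) * ((Real.sinh (u/2)^2 + c)^(m+1))⁻¹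
      = 2 * (Real.sqrt c * (c^(m+1))⁻¹ *
          ((π/2) * ∏ i ∈ Finset.range m, (2*(i:ℝ)+1)/(2*i+2))) := by
  have h1 := cosh_subst (fun t => ((t^2+c)^(m+1))⁻¹)
  calc ∫ u in Set.Ioi (0:ℝ), Real.cosh (u/2) * ((Real.sinh (u/2)^2 + c)^(m+1))⁻¹
      = ∫ u in Set.Ioi (0:ℝ),
          2 * ((Real.cosh (u/2) / 2) * ((Real.sinh (u/2)^2 + c)^(m+1))⁻¹) := by
        apply MeasureTheory.setIntegral_congr_fun measurableSet_Ioi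
        intro u _; dsimp only; ring
    _ = 2 * ∫ u in Set.Ioi (0:ℝ),
          (Real.cosh (u/2) / 2) * ((Real.sinh (u/2)^2 + c)^(m+1))⁻¹ :=
        integral_const_mul 2 _
    _ = 2 * ∫ t in Set.Ioi (0:ℝ), ((t^2+c)^(m+1))⁻¹ := by rw [← h1]
    _ = 2 * (Real.sqrt c * (c^(m+1))⁻¹ *
          ((π/2) * ∏ i ∈ Finset.range m, (2*(i:ℝ)+1)/(2*i+2))) := by
        rw [scaled_int c hc m, wallis_int m]

lemma iter_formula (g f : ℝ → ℝ) (Mg : ℝ) (hgm : Measurable g) (hgb : ∀ u, |g u| ≤ Mg)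
    (hf : ∀ x : ℝ, 0 < x →
      f x = ∫ u in Set.Ioi (0:ℝ), g u * Real.cosh (u / 2) / (Real.sinh (u / 2) ^ 2 + x)) :
    ∀ n : ℕ, ∀ ξ : ℝ, 0 < ξ → iteratedDeriv n f ξ = ∫ u in Set.Ioi (0:ℝ),
      g u * Real.cosh (u/2) * ((-1:ℝ)^n * n.factorial *
        ((Real.sinh (u/2)^2 + ξ)^(n+1))⁻¹) := by
  intro n
  induction n with
  | zero =>
    intro ξ hξ
    rw [iteratedDeriv_zero, hf ξ hξ]
    apply MeasureTheory.setIntegral_congr_fun measurableSet_Ioi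
    intro u _
    simp [div_eq_mul_inv]
  | succ n ih =>
    intro ξ hξ
    rw [iteratedDeriv_succ]
    have heq : iteratedDeriv n f =ᶠ[nhds ξ] (fun x => ∫ u in Set.Ioi (0:ℝ),
        g u * Real.cosh (u/2) * ((-1:ℝ)^n * n.factorial *
          ((Real.sinh (u/2)^2 + x)^(n+1))⁻¹)) :=
      Filter.eventuallyEq_of_mem (isOpen_Ioi.mem_nhds hξ) (fun x hx => ih x hx)
    rw [heq.deriv_eq]
    exact (deriv_step g Mg hgm hgb n ξ hξ
      (cosh_integrable (ξ/2) (by linarith) (n+1))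
      (cosh_integrable ξ hξ n)).deriv

theorem elliptic_deriv_bound (g : ℝ → ℝ) (Mg : ℝ)
    (hgm : Measurable g) (hgb : ∀ u : ℝ, |g u| ≤ Mg)
    (hsupp : HasCompactSupport g)
    (f : ℝ → ℝ)
    (hf : ∀ x : ℝ, 0 < x →
      f x = ∫ u in Set.Ioi (0:ℝ), g u * Real.cosh (u / 2) / (Real.sinh (u / 2) ^ 2 + x))
    (K : ℕ) (ξ : ℝ) (hξ : 0 < ξ) :
    |iteratedDeriv (K + 1) f ξ| ≤
      Mg * ((K + 1).factorial : ℝ) * π * ξ ^ (-(3:ℝ)/2 - K) *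
        ∏ k ∈ Finset.Icc 1 (K + 1), ((2 * (k:ℝ) - 1) / (2 * k)) := by
  have hMg : 0 ≤ Mg := le_trans (abs_nonneg _) (hgb 0)
  rw [iter_formula g f Mg hgm hgb hf (K+1) ξ hξ]
  have hB' := (cosh_integrable ξ hξ (K+1)).const_mul (Mg * ((K+1).factorial : ℝ))
  have hB : IntegrableOn (fun u : ℝ => Mg * (((K+1).factorial : ℝ) *
      (Real.cosh (u/2) * ((Real.sinh (u/2)^2 + ξ)^(K+1+1))⁻¹))) (Set.Ioi 0) := by
    apply IntegrableOn.congr_fun hB' ?_ measurableSet_Ioi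
    intro u _; dsimp only; ring
  have hle : ∀ u : ℝ, ‖g u * Real.cosh (u/2) * ((-1:ℝ)^(K+1) * ((K+1).factorial : ℝ) *
      ((Real.sinh (u/2)^2 + ξ)^(K+1+1))⁻¹)‖ ≤ Mg * (((K+1).factorial : ℝ) *
      (Real.cosh (u/2) * ((Real.sinh (u/2)^2 + ξ)^(K+1+1))⁻¹)) := by
    intro u
    have h2 : (0:ℝ) < (Real.sinh (u/2)^2 + ξ)^(K+1+1) := by positivity
    calc ‖g u * Real.cosh (u/2) * ((-1:ℝ)^(K+1) * ((K+1).factorial : ℝ) *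
          ((Real.sinh (u/2)^2 + ξ)^(K+1+1))⁻¹)‖
        = |g u| * (Real.cosh (u/2) * (((K+1).factorial : ℝ) *
            ((Real.sinh (u/2)^2 + ξ)^(K+1+1))⁻¹)) := by
          rw [Real.norm_eq_abs]
          simp [abs_mul, abs_of_pos (Real.cosh_pos (u/2)), abs_of_pos (inv_pos.mpr h2),
            abs_pow, (Real.cosh_pos (u/2)).le, mul_assoc]
      _ ≤ Mg * (Real.cosh (u/2) * (((K+1).factorial : ℝ) *
            ((Real.sinh (u/2)^2 + ξ)^(K+1+1))⁻¹)) := by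
          gcongr <;> first
            | exact hgb u
            | positivity
            | linarith
      _ = Mg * (((K+1).factorial : ℝ) *
            (Real.cosh (u/2) * ((Real.sinh (u/2)^2 + ξ)^(K+1+1))⁻¹)) := by ring
  have hbd := MeasureTheory.norm_integral_le_of_norm_le hB (Filter.Eventually.of_forall hle)
  rw [Real.norm_eq_abs] at hbd
  refine le_trans hbd (le_of_eq ?_)
  rw [MeasureTheory.integral_const_mul, MeasureTheory.integral_const_mul, cosh_val ξ hξ (K+1)]
  rw [← prod_convert K, ← rpow_convert ξ hξ K]
  ring
end

section
/- Fix 0 < ε < 1 and n > 1. Among pairs (c, K) with c > 1 and K > 0 real, subject to the constraint ((c−1)/(c+1))^K = ε, the product K · log_c n (i.e., K · ln n / ln c) is minimized at c = 1 + √2, with K = log_c(1/ε) = ln(1/ε)/ln(1+√2). -/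
open Real

noncomputable def psiF : ℝ → ℝ := fun u => Real.log (Real.log (1 + Real.exp u))

noncomputable def DF : ℝ → ℝ :=
  fun u => Real.exp u / ((1 + Real.exp u) * Real.log (1 + Real.exp u))

lemma hGpos (u : ℝ) : 0 < Real.log (1 + Real.exp u) :=
  Real.log_pos (by linarith [Real.exp_pos u])

lemma hG (u : ℝ) : HasDerivAt (fun u => Real.log (1 + Real.exp u))
    (Real.exp u / (1 + Real.exp u)) u := by
  have h1 : HasDerivAt (fun u => 1 + Real.exp u) (Real.exp u) u :=
    (Real.hasDerivAt_exp u).const_add 1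
  exact h1.log (by positivity)

lemma hpsi (u : ℝ) : HasDerivAt psiF (DF u) u := by
  have := (hG u).log (ne_of_gt (hGpos u))
  unfold psiF
  simpa [psiF, DF, div_div] using this

lemma hDF (u : ℝ) : HasDerivAt DF
    ((Real.exp u * ((1 + Real.exp u) * Real.log (1 + Real.exp u)) -
      Real.exp u * (Real.exp u * Real.log (1 + Real.exp u) +
        (1 + Real.exp u) * (Real.exp u / (1 + Real.exp u)))) /
      ((1 + Real.exp u) * Real.log (1 + Real.exp u)) ^ 2) u := by
  have hden : HasDerivAt (fun u => (1 + Real.exp u) * Real.log (1 + Real.exp u))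
      (Real.exp u * Real.log (1 + Real.exp u) +
        (1 + Real.exp u) * (Real.exp u / (1 + Real.exp u))) u :=
    ((Real.hasDerivAt_exp u).const_add 1).mul (hG u)
  exact (Real.hasDerivAt_exp u).div hden (by have := hGpos u; positivity)

lemma psi_concave : StrictConcaveOn ℝ Set.univ psiF := by
  apply strictConcaveOn_of_deriv2_neg convex_univ
  · exact fun x _ => (hpsi x).continuousAt.continuousWithinAt
  · intro x _
    have hd : deriv psiF = DF := funext fun u => (hpsi u).deriv
    have h2 : deriv^[2] psiF x = deriv DF x := by
      simp [Function.iterate_succ, hd]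
    rw [h2, (hDF x).deriv]
    set E := Real.exp x with hE
    have hEpos : 0 < E := Real.exp_pos x
    set G := Real.log (1 + E) with hGdef
    have hGp : 0 < G := hGpos x
    have hGE : G < E := by
      have := Real.log_lt_sub_one_of_pos (show (0:ℝ) < 1 + E by linarith)
        (by linarith)
      simpa using this
    apply div_neg_of_neg_of_pos
    · have h1E : (1 : ℝ) + E ≠ 0 := by positivity
      have : (1 + E) * (E / (1 + E)) = E := by field_simp
      rw [this]
      nlinarith
    · positivity

lemma key (p q : ℝ) (hp : 0 < p) (hq : 0 < q) (hpq : p * q = 2) :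
    Real.log (1 + p) * Real.log (1 + q) ≤
      Real.log (1 + Real.sqrt 2) * Real.log (1 + Real.sqrt 2) := by
  have hmid : ((1:ℝ)/2) • Real.log p + ((1:ℝ)/2) • Real.log q = Real.log 2 / 2 := by
    have : Real.log p + Real.log q = Real.log 2 := by
      rw [← Real.log_mul (ne_of_gt hp) (ne_of_gt hq), hpq]
    simp only [smul_eq_mul]; linarith
  have hsq : Real.exp (Real.log 2 / 2) = Real.sqrt 2 := by
    rw [← Real.log_sqrt (by norm_num), Real.exp_log (Real.sqrt_pos.mpr (by norm_num))]
  have hcc := psi_concave.concaveOn.2 (Set.mem_univ (Real.log p))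
    (Set.mem_univ (Real.log q)) (by norm_num : (0:ℝ) ≤ 1/2) (by norm_num : (0:ℝ) ≤ 1/2)
    (by norm_num)
  rw [hmid] at hcc
  have hψp : psiF (Real.log p) = Real.log (Real.log (1 + p)) := by
    simp [psiF, Real.exp_log hp]
  have hψq : psiF (Real.log q) = Real.log (Real.log (1 + q)) := by
    simp [psiF, Real.exp_log hq]
  have hψm : psiF (Real.log 2 / 2) = Real.log (Real.log (1 + Real.sqrt 2)) := by
    simp [psiF, hsq]
  rw [hψp, hψq, hψm] at hcc
  have hLp : 0 < Real.log (1 + p) := Real.log_pos (by linarith)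
  have hLq : 0 < Real.log (1 + q) := Real.log_pos (by linarith)
  have hLs : 0 < Real.log (1 + Real.sqrt 2) :=
    Real.log_pos (by nlinarith [Real.sqrt_pos.mpr (show (0:ℝ) < 2 by norm_num)])
  have := Real.exp_le_exp.mpr (show Real.log (Real.log (1+p)) + Real.log (Real.log (1+q)) ≤
      Real.log (Real.log (1 + Real.sqrt 2)) + Real.log (Real.log (1 + Real.sqrt 2)) by
    simp only [smul_eq_mul] at hcc; linarith)
  rwa [Real.exp_add, Real.exp_add, Real.exp_log hLp, Real.exp_log hLq,
    Real.exp_log hLs] at this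

theorem optimal_sampling (ε n : ℝ) (hε : 0 < ε) (hε1 : ε < 1) (hn : 1 < n)
    (F : ℝ → ℝ)
    (hF : ∀ c : ℝ, F c = (Real.log (1 / ε) / Real.log ((c + 1) / (c - 1))) *
      (Real.log n / Real.log c)) :
    (∀ c ∈ Set.Ioi (1:ℝ), F (1 + Real.sqrt 2) ≤ F c) ∧
      Real.logb (1 + Real.sqrt 2) (1 / ε) = Real.log (1 / ε) / Real.log (1 + Real.sqrt 2) := by
  constructor
  · intro c hc
    simp only [Set.mem_Ioi] at hc
    have hs2 : Real.sqrt 2 * Real.sqrt 2 = 2 := Real.mul_self_sqrt (by norm_num)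
    have hs1 : 1 < Real.sqrt 2 := by nlinarith [Real.sqrt_pos.mpr (show (0:ℝ) < 2 by norm_num)]
    set s := 1 + Real.sqrt 2 with hsdef
    have hss : (s + 1) / (s - 1) = s := by
      rw [hsdef]
      have h0 : Real.sqrt 2 ≠ 0 := by positivity
      field_simp
      nlinarith
    have hL1 : 0 < Real.log (1 / ε) := Real.log_pos (by rw [lt_div_iff₀ hε]; linarith)
    have hL2 : 0 < Real.log n := Real.log_pos hn
    have hLs : 0 < Real.log s := Real.log_pos (by rw [hsdef]; linarith)
    have hA : 0 < Real.log c := Real.log_pos hc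
    have hBgt : 1 < (c + 1) / (c - 1) := by
      rw [lt_div_iff₀ (by linarith)]; linarith
    have hB : 0 < Real.log ((c + 1) / (c - 1)) := Real.log_pos hBgt
    have hAB : Real.log c * Real.log ((c + 1) / (c - 1)) ≤ Real.log s * Real.log s := by
      have hp : (0:ℝ) < c - 1 := by linarith
      have hq : (0:ℝ) < 2 / (c - 1) := by positivity
      have hpq : (c - 1) * (2 / (c - 1)) = 2 := by field_simp
      have h1 : (1:ℝ) + (c - 1) = c := by ring
      have h2 : (1:ℝ) + 2 / (c - 1) = (c + 1) / (c - 1) := by field_simp; ring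
      have := key (c - 1) (2 / (c - 1)) hp hq hpq
      rw [h1, h2] at this
      rw [hsdef]
      exact this
    rw [hF, hF, hss]
    rw [div_mul_div_comm, div_mul_div_comm]
    apply div_le_div_of_nonneg_left (by positivity) (by positivity)
    calc Real.log ((c + 1) / (c - 1)) * Real.log c
        = Real.log c * Real.log ((c + 1) / (c - 1)) := by ring
      _ ≤ Real.log s * Real.log s := hAB
  · simp [Real.logb]
end

section
/- The function c ↦ ln((c+1)/(c−1)) · ln(c) on (1, ∞) attains its maximum at c = 1 + √2. -/
open Real

private lemma convexOn_sinh : ConvexOn ℝ (Set.Ici 0) Real.sinh := by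
  apply convexOn_of_deriv2_nonneg (convex_Ici 0) Real.continuous_sinh.continuousOn
  · exact Real.differentiable_sinh.differentiableOn
  · simp only [Real.deriv_sinh]
    exact Real.differentiable_cosh.differentiableOn
  · intro x hx
    rw [interior_Ici, Set.mem_Ioi] at hx
    simp only [Function.iterate_succ, Function.iterate_zero, Function.comp_apply, id_eq,
      Real.deriv_sinh, Real.deriv_cosh]
    exact (Real.sinh_pos_iff.2 hx).le

private lemma sinh_div_mono {a b : ℝ} (ha : 0 ≤ a) (hab : a ≤ b) :
    b * Real.sinh a ≤ a * Real.sinh b := by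
  rcases eq_or_lt_of_le (ha.trans hab) with hb | hb
  · have ha0 : a = 0 := le_antisymm (hab.trans hb.symm.le) ha
    simp [ha0, ← hb]
  · have hb0 : b ≠ 0 := hb.ne'
    have h1 : Real.sinh ((1 - a / b) • (0:ℝ) + (a / b) • b) ≤
        (1 - a / b) * Real.sinh 0 + (a / b) * Real.sinh b := by
      apply convexOn_sinh.2 (Set.self_mem_Ici) (Set.mem_Ici.2 (ha.trans hab))
      · have : a / b ≤ 1 := div_le_one_of_le₀ hab hb.le
        linarith
      · positivity
      · ring
    have h2 : (1 - a / b) • (0:ℝ) + (a / b) • b = a := by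
      field_simp
      rw [smul_zero, zero_add, smul_eq_mul]
      field_simp
    rw [h2, Real.sinh_zero] at h1
    have := mul_le_mul_of_nonneg_left h1 hb.le
    calc b * Real.sinh a ≤ b * ((1 - a / b) * 0 + a / b * Real.sinh b) := this
      _ = a * Real.sinh b := by field_simp; ring

private lemma key_ineq (q : ℝ) (hq : 0 ≤ q) :
    (Real.arsinh (Real.cosh q)) ^ 2 ≤ q ^ 2 + (Real.arsinh 1) ^ 2 := by
  set F : ℝ → ℝ := fun x => x ^ 2 + (Real.arsinh 1) ^ 2 - (Real.arsinh (Real.cosh x)) ^ 2 with hF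
  have hderiv : ∀ x : ℝ, HasDerivAt F
      (2 * x - 2 * Real.arsinh (Real.cosh x) *
        ((√(1 + Real.cosh x ^ 2))⁻¹ * Real.sinh x)) x := by
    intro x
    have h1 : HasDerivAt (fun y => Real.arsinh (Real.cosh y))
        ((√(1 + Real.cosh x ^ 2))⁻¹ * Real.sinh x) x :=
      (Real.hasDerivAt_arsinh (Real.cosh x)).comp x (Real.hasDerivAt_cosh x)
    have h2 : HasDerivAt (fun y => (Real.arsinh (Real.cosh y)) ^ 2)
        (2 * Real.arsinh (Real.cosh x) * ((√(1 + Real.cosh x ^ 2))⁻¹ * Real.sinh x)) x := by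
      have := h1.pow 2
      exact ((hasDerivAt_pow 2 _).comp x h1).congr_deriv (by norm_num)
    have h3 : HasDerivAt (fun y : ℝ => y ^ 2 + (Real.arsinh 1) ^ 2) (2 * x) x := by
      simpa using (hasDerivAt_pow 2 x).add_const ((Real.arsinh 1) ^ 2)
    exact h3.sub h2
  have hmono : MonotoneOn F (Set.Ici 0) := by
    apply monotoneOn_of_deriv_nonneg (convex_Ici 0)
    · exact (fun x _ => (hderiv x).differentiableAt.continuousAt.continuousWithinAt)
    · exact fun x _ => (hderiv x).differentiableAt.differentiableWithinAt
    · intro x hx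
      rw [interior_Ici, Set.mem_Ioi] at hx
      rw [(hderiv x).deriv]
      set s := Real.arsinh (Real.cosh x) with hs
      have hsinh_s : Real.sinh s = Real.cosh x := Real.sinh_arsinh _
      have hcosh_s : Real.cosh s = √(1 + Real.cosh x ^ 2) := Real.cosh_arsinh _
      have hxs : x ≤ s := by
        have : Real.sinh x < Real.sinh s := by
          rw [hsinh_s]; exact Real.sinh_lt_cosh x
        exact (Real.sinh_lt_sinh.1 this).le
      have hchain : s * Real.sinh x ≤ x * Real.cosh s := by
        calc s * Real.sinh x ≤ x * Real.sinh s := sinh_div_mono hx.le hxs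
          _ ≤ x * Real.cosh s := by
            exact mul_le_mul_of_nonneg_left (Real.sinh_lt_cosh s).le hx.le
      rw [← hcosh_s]
      have hcs : (0:ℝ) < Real.cosh s := Real.cosh_pos s
      rw [sub_nonneg]
      rw [mul_comm (Real.cosh s)⁻¹ (Real.sinh x), ← div_eq_mul_inv]
      rw [mul_div_assoc', div_le_iff₀ hcs]
      nlinarith
  have h0 : F 0 = 0 := by simp [hF]
  have := hmono (Set.self_mem_Ici) (Set.mem_Ici.2 hq) hq
  rw [h0] at this
  simp only [hF] at this
  linarith

theorem log_product_max (c : ℝ) (hc : 1 < c) :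
    Real.log ((c + 1) / (c - 1)) * Real.log c ≤
      Real.log ((1 + Real.sqrt 2 + 1) / (1 + Real.sqrt 2 - 1)) * Real.log (1 + Real.sqrt 2) := by
  have hc0 : (0:ℝ) < c := lt_trans one_pos hc
  have hc1 : (0:ℝ) < c - 1 := by linarith
  set u := Real.log c with hu_def
  set v := Real.log ((c + 1) / (c - 1)) with hv_def
  have hu : 0 < u := Real.log_pos hc
  have hv : 0 < v := Real.log_pos ((one_lt_div hc1).2 (by linarith))
  have heu : Real.exp u = c := Real.exp_log hc0
  have hev : Real.exp v = (c + 1) / (c - 1) :=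
    Real.exp_log (div_pos (by linarith) hc1)
  have hcon : Real.exp u * Real.exp v = Real.exp u + Real.exp v + 1 := by
    rw [heu, hev]
    field_simp
    ring
  -- relation sinh p = cosh q for p = (u+v)/2, q = (u-v)/2
  set p := (u + v) / 2 with hp_def
  set q := (u - v) / 2 with hq_def
  have hA : Real.exp (u / 2) * Real.exp (u / 2) = Real.exp u := by
    rw [← Real.exp_add]; ring_nf
  have hB : Real.exp (v / 2) * Real.exp (v / 2) = Real.exp v := by
    rw [← Real.exp_add]; ring_nf
  have hApos : 0 < Real.exp (u / 2) := Real.exp_pos _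
  have hBpos : 0 < Real.exp (v / 2) := Real.exp_pos _
  have hpq : Real.sinh p = Real.cosh q := by
    rw [Real.sinh_eq, Real.cosh_eq]
    have e1 : Real.exp p = Real.exp (u / 2) * Real.exp (v / 2) := by
      rw [← Real.exp_add, hp_def]; ring_nf
    have e2 : Real.exp (-p) = (Real.exp (u / 2) * Real.exp (v / 2))⁻¹ := by
      rw [← e1, Real.exp_neg]
    have e3 : Real.exp q = Real.exp (u / 2) / Real.exp (v / 2) := by
      rw [eq_div_iff hBpos.ne', ← Real.exp_add, hq_def]; ring_nf
    have e4 : Real.exp (-q) = Real.exp (v / 2) / Real.exp (u / 2) := by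
      rw [Real.exp_neg, e3]
      rw [inv_div]
    rw [e1, e2, e3, e4]
    have hc2 : Real.exp (u/2) * Real.exp (u/2) * (Real.exp (v/2) * Real.exp (v/2)) =
        Real.exp (u/2) * Real.exp (u/2) + Real.exp (v/2) * Real.exp (v/2) + 1 := by
      rw [hA, hB]; exact hcon
    rw [div_eq_div_iff (by norm_num) (by norm_num)]
    field_simp
    linear_combination hc2
  have hppos : 0 < p := by positivity
  have hp_eq : p = Real.arsinh (Real.cosh q) := by
    rw [← hpq, Real.arsinh_sinh]
  have hkey : p ^ 2 ≤ q ^ 2 + (Real.arsinh 1) ^ 2 := by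
    have := key_ineq |q| (abs_nonneg q)
    rw [Real.cosh_abs, sq_abs] at this
    rw [hp_eq]
    exact this
  -- now the right-hand side
  have hsqrt2 : (0:ℝ) < √2 := Real.sqrt_pos.2 (by norm_num)
  have hsq : √2 * √2 = 2 := Real.mul_self_sqrt (by norm_num)
  have hrhs : (1 + √2 + 1) / (1 + √2 - 1) = 1 + √2 := by
    rw [show (1:ℝ) + √2 + 1 = 2 + √2 by ring, show (1:ℝ) + √2 - 1 = √2 by ring]
    rw [div_eq_iff hsqrt2.ne']
    nlinarith
  have hL : Real.arsinh 1 = Real.log (1 + √2) := by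
    rw [Real.arsinh]
    norm_num
  rw [hrhs, ← hL]
  have huv : v * u = p ^ 2 - q ^ 2 := by
    rw [hp_def, hq_def]; ring
  calc v * u = p ^ 2 - q ^ 2 := huv
    _ ≤ (Real.arsinh 1) ^ 2 := by linarith
    _ = Real.arsinh 1 * Real.arsinh 1 := sq (Real.arsinh 1) ▸ by ring
end
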